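/- arXiv:math-ph/0609021 — 3 statements merged into one kernel-verified Lean document; each statement's English description precedes it below -/
import Mathlib

section
/- Let n ≥ 1 and let f : ℝ → ℝ be of class C^{n+1} with ‖f‖_{C^{n+1}} := Σ_{k=0}^{n+1} sup_x |f^{(k)}(x)| = A⁺ < ∞ and Σ_{k=0}^{n} |f^{(k)}(x)| ≥ A⁻ > 0 for all x ∈ ℝ. Then there exists a constant c > 0 depending only on A⁺, A⁻ and n such that for every σ with 0 < σ ≤ A⁻/2 and every bounded interval Δ ⊂ ℝ, the set Γ_σ = {x ∈ ℝ : |f(x)| ≤ σ} has a finite number of connected components inside Δ, and this number does not exceed c(|Δ| + 1), where |Δ| denotes the length of Δ. -/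
open Set


lemma finite_and_ncard_le_of_finset_bound {α : Type*} {Z : Set α} {m : ℕ}
    (h : ∀ T : Finset α, ↑T ⊆ Z → T.card ≤ m) : Z.Finite ∧ Z.ncard ≤ m := by
  have hfin : Z.Finite := by
    by_contra hinf
    obtain ⟨T, hTZ, hTc⟩ := Set.Infinite.exists_subset_card_eq hinf (m + 1)
    have := h T hTZ
    omega
  refine ⟨hfin, ?_⟩
  rw [Set.ncard_eq_toFinset_card Z hfin]
  exact h hfin.toFinset (by simp)

lemma iterated_rolle : ∀ (k : ℕ) (g : ℝ → ℝ), ContDiff ℝ (k : ℕ) g →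
    ∀ x : ℕ → ℝ, (∀ i j, i < j → j ≤ k → x i < x j) → (∀ i ≤ k, g (x i) = 0) →
    ∃ y, x 0 ≤ y ∧ y ≤ x k ∧ iteratedDeriv k g y = 0 := by
  intro k
  induction k with
  | zero => exact fun g _ x _ hz => ⟨x 0, le_refl _, le_refl _, by simpa using hz 0 le_rfl⟩
  | succ k ih =>
    intro g hg x hmono hz
    have hg2 : ContDiff ℝ ((k : WithTop ℕ∞) + 1) g := by exact_mod_cast hg
    rw [contDiff_succ_iff_deriv] at hg2
    have hgd : Differentiable ℝ g := hg2.1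
    have hgd' : ContDiff ℝ (k : ℕ) (deriv g) := hg2.2.2
    have key : ∀ i, i ≤ k → ∃ c, x i < c ∧ c < x (i+1) ∧ deriv g c = 0 := by
      intro i hi
      obtain ⟨c, hc, hc0⟩ := exists_deriv_eq_zero (hmono i (i+1) (by omega) (by omega))
        hgd.continuous.continuousOn
        (by rw [hz i (by omega), hz (i+1) (by omega)])
      exact ⟨c, hc.1, hc.2, hc0⟩
    set y : ℕ → ℝ := fun i => if h : i ≤ k then (key i h).choose else 0 with hy
    have hyp : ∀ i, i ≤ k → x i < y i ∧ y i < x (i+1) ∧ deriv g (y i) = 0 := by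
      intro i h
      simp only [hy, dif_pos h]
      exact (key i h).choose_spec
    have hmono' : ∀ i j, i < j → j ≤ k → y i < y j := by
      intro i j hij hj
      have h1 := (hyp i (by omega)).2.1
      have h2 := (hyp j hj).1
      have h3 : x (i+1) ≤ x j := by
        rcases eq_or_lt_of_le (show i+1 ≤ j by omega) with h | h
        · rw [h]
        · exact le_of_lt (hmono _ _ h (by omega))
      linarith
    obtain ⟨z, hz0, hzk, hzd⟩ := ih (deriv g) hgd' y hmono' (fun i hi => (hyp i hi).2.2)
    refine ⟨z, ?_, ?_, ?_⟩
    · have := (hyp 0 (by omega)).1; linarith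
    · have := (hyp k le_rfl).2.1; linarith
    · rw [iteratedDeriv_succ']; exact hzd


lemma zeros_card_le {k : ℕ} {g : ℝ → ℝ} (hg : ContDiff ℝ (k : ℕ) g) {u v : ℝ}
    (hne : ∀ y ∈ Icc u v, iteratedDeriv k g y ≠ 0) :
    {t | t ∈ Icc u v ∧ g t = 0}.Finite ∧ {t | t ∈ Icc u v ∧ g t = 0}.ncard ≤ k := by
  apply finite_and_ncard_le_of_finset_bound
  intro T hT
  by_contra hc
  push_neg at hc
  obtain ⟨S, hST, hSc⟩ := T.exists_subset_card_eq (n := k+1) (by omega)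
  have e := S.orderIsoOfFin hSc
  set x : ℕ → ℝ := fun i => (e ⟨min i k, by omega⟩ : ℝ) with hx
  have hmem : ∀ i, x i ∈ {t | t ∈ Icc u v ∧ g t = 0} := by
    intro i
    apply hT
    apply hST
    exact (e _).2
  have hmono : ∀ i j, i < j → j ≤ k → x i < x j := by
    intro i j hij hj
    have : (⟨min i k, by omega⟩ : Fin (k+1)) < ⟨min j k, by omega⟩ := by
      simp [Fin.mk_lt_mk]; omega
    exact e.strictMono this
  obtain ⟨y, hy0, hyk, hyd⟩ := iterated_rolle k g hg x hmono (fun i _ => (hmem i).2)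
  have h0 := (hmem 0).1
  have hk := (hmem k).1
  exact hne y ⟨le_trans h0.1 hy0, le_trans hyk hk.2⟩ hyd


lemma exists_gap {f : ℝ → ℝ} {σ x y : ℝ} (hx : |f x| ≤ σ) (hy : |f y| ≤ σ) (hxy : x < y)
    (hne : connectedComponentIn {t : ℝ | |f t| ≤ σ} x ≠ connectedComponentIn {t : ℝ | |f t| ≤ σ} y) :
    ∃ z, x < z ∧ z < y ∧ σ < |f z| := by
  by_contra h
  push_neg at h
  have hsub : Icc x y ⊆ {t : ℝ | |f t| ≤ σ} := by
    intro t ht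
    rcases eq_or_lt_of_le ht.1 with h1 | h1
    · simpa [← h1] using hx
    rcases eq_or_lt_of_le ht.2 with h2 | h2
    · simpa [h2] using hy
    · exact h t h1 h2
  have hmem : y ∈ connectedComponentIn {t : ℝ | |f t| ≤ σ} x :=
    isPreconnected_Icc.subset_connectedComponentIn ⟨le_rfl, le_of_lt hxy⟩ hsub
      ⟨le_of_lt hxy, le_rfl⟩
  exact hne (connectedComponentIn_eq hmem)


lemma interval_claim (n : ℕ) (hn : 1 ≤ n) (Aminus A : ℝ) (hAminus : 0 < Aminus) (hA : 0 < A)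
    (f : ℝ → ℝ) (hf : ContDiff ℝ (n + 1) f)
    (hbd : ∀ k, k ≤ n + 1 → ∀ x : ℝ, |iteratedDeriv k f x| ≤ A)
    (hminus : ∀ x : ℝ, Aminus ≤ ∑ k ∈ Finset.range (n + 1), |iteratedDeriv k f x|)
    (σ : ℝ) (hσ : 0 < σ) (hσA : σ ≤ Aminus / 2)
    (u v : ℝ) (hlen : v - u ≤ Aminus / (4 * n * A)) :
    ∀ T : Finset (Set ℝ),
      ↑T ⊆ {C : Set ℝ | ∃ x ∈ {y : ℝ | |f y| ≤ σ} ∩ Icc u v,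
              C = connectedComponentIn {y : ℝ | |f y| ≤ σ} x} → T.card ≤ 2*n+1 := by
  classical
  intro T hT
  by_contra hc
  push_neg at hc
  obtain ⟨S, hST, hSc⟩ := T.exists_subset_card_eq (n := 2*n+2) (by omega)
  set Γ : Set ℝ := {y : ℝ | |f y| ≤ σ} with hΓ
  -- choice of representatives
  set g : Set ℝ → ℝ := fun C =>
    if h : ∃ x ∈ Γ ∩ Icc u v, C = connectedComponentIn Γ x then h.choose else 0 with hg
  have hgspec : ∀ C ∈ S, g C ∈ Γ ∩ Icc u v ∧ C = connectedComponentIn Γ (g C) := by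
    intro C hC
    have h : ∃ x ∈ Γ ∩ Icc u v, C = connectedComponentIn Γ x := hT (hST hC)
    simp only [hg]
    rw [dif_pos h]
    exact ⟨h.choose_spec.1, h.choose_spec.2⟩
  set P : Finset ℝ := S.image g with hP
  have hginj : Set.InjOn g ↑S := by
    intro C1 h1 C2 h2 hgeq
    rw [(hgspec C1 h1).2, (hgspec C2 h2).2, hgeq]
  have hPc : P.card = 2*n+2 := by
    rw [hP, Finset.card_image_of_injOn hginj, hSc]
  have hPcomp : ∀ p ∈ P, ∀ q ∈ P, p ≠ q →
      connectedComponentIn Γ p ≠ connectedComponentIn Γ q := by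
    intro p hp q hq hpq
    obtain ⟨C1, hC1, rfl⟩ := Finset.mem_image.mp hp
    obtain ⟨C2, hC2, rfl⟩ := Finset.mem_image.mp hq
    rw [← (hgspec C1 hC1).2, ← (hgspec C2 hC2).2]
    intro h
    exact hpq (by rw [h])
  have hPmem : ∀ p ∈ P, p ∈ Γ ∩ Icc u v := by
    intro p hp
    obtain ⟨C1, hC1, rfl⟩ := Finset.mem_image.mp hp
    exact (hgspec C1 hC1).1
  -- enumerate
  have e := P.orderIsoOfFin hPc
  set x : ℕ → ℝ := fun i => (e ⟨min i (2*n+1), by omega⟩ : ℝ) with hx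
  have hxmem : ∀ i, x i ∈ Γ ∩ Icc u v := fun i => hPmem _ (e _).2
  have hxmono : ∀ i j, i < j → j ≤ 2*n+1 → x i < x j := by
    intro i j hij hj
    have : (⟨min i (2*n+1), by omega⟩ : Fin (2*n+2)) < ⟨min j (2*n+1), by omega⟩ := by
      simp only [Fin.mk_lt_mk]; omega
    exact e.strictMono this
  have hxcomp : ∀ i j, i < j → j ≤ 2*n+1 →
      connectedComponentIn Γ (x i) ≠ connectedComponentIn Γ (x j) :=
    fun i j hij hj => hPcomp _ (e _).2 _ (e _).2 (ne_of_lt (hxmono i j hij hj))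
  -- find k with large derivative at x 0
  set x₀ : ℝ := x 0 with hx₀
  have hfx₀ : |f x₀| ≤ σ := (hxmem 0).1
  obtain ⟨i₀, hi₀n, hi₀⟩ : ∃ i, i < n ∧ Aminus/(2*n) ≤ |iteratedDeriv (i+1) f x₀| := by
    by_contra hcon
    push_neg at hcon
    have hsum := hminus x₀
    rw [Finset.sum_range_succ'] at hsum
    have hlt : ∑ i ∈ Finset.range n, |iteratedDeriv (i+1) f x₀| <
        ∑ _i ∈ Finset.range n, Aminus/(2*n) := by
      apply Finset.sum_lt_sum_of_nonempty
      · exact Finset.nonempty_range_iff.mpr (by omega)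
      · intro i hi; exact hcon i (Finset.mem_range.mp hi)
    rw [Finset.sum_const, Finset.card_range, nsmul_eq_mul] at hlt
    have h0 : |iteratedDeriv 0 f x₀| ≤ σ := by rwa [iteratedDeriv_zero]
    have hn' : (1:ℝ) ≤ (n:ℝ) := by exact_mod_cast hn
    have : (n:ℝ) * (Aminus/(2*n)) = Aminus/2 := by field_simp
    rw [this] at hlt
    linarith
  set k : ℕ := i₀ + 1 with hk
  have hk1 : 1 ≤ k := by omega
  have hkn : k ≤ n := by omega
  -- Lipschitz bound on iteratedDeriv k f, hence nonvanishing on Icc u v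
  have hdiff : Differentiable ℝ (iteratedDeriv k f) := by
    apply hf.differentiable_iteratedDeriv
    exact_mod_cast (by exact_mod_cast Nat.lt_succ_of_le hkn : (k : ℕ∞) < (n:ℕ∞) + 1)
  have hlip : ∀ y z : ℝ, |iteratedDeriv k f y - iteratedDeriv k f z| ≤ A * |y - z| := by
    intro y z
    have := Convex.norm_image_sub_le_of_norm_deriv_le (s := univ)
      (fun t _ => (hdiff t)) (C := A)
      (fun t _ => by rw [← iteratedDeriv_succ, Real.norm_eq_abs]; exact hbd (k+1) (by omega) t)
      convex_univ (mem_univ z) (mem_univ y)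
    simpa [Real.norm_eq_abs] using this
  have hne : ∀ y ∈ Icc u v, iteratedDeriv k f y ≠ 0 := by
    intro y hy h0
    have h1 := hlip x₀ y
    have hx₀m := (hxmem 0).2
    have habs : |x₀ - y| ≤ v - u := by
      rw [abs_le]
      constructor <;> [linarith [hx₀m.1, hy.2]; linarith [hx₀m.2, hy.1]]
    have hn' : (1:ℝ) ≤ (n:ℝ) := by exact_mod_cast hn
    have hup : A * |x₀ - y| ≤ Aminus/(4*n) := by
      have : A * |x₀ - y| ≤ A * (Aminus / (4*n*A)) := by
        apply mul_le_mul_of_nonneg_left (le_trans habs hlen) (le_of_lt hA)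
      calc A * |x₀ - y| ≤ A * (Aminus / (4*n*A)) := this
        _ = Aminus/(4*n) := by field_simp
    rw [h0, sub_zero] at h1
    have : Aminus/(2*n) ≤ Aminus/(4*n) := le_trans hi₀ (le_trans h1 hup)
    have h4 : Aminus/(4*n) < Aminus/(2*n) := by
      apply div_lt_div_of_pos_left hAminus (by positivity)
      nlinarith
    linarith
  -- zero-counting for f = τ
  have final : ∀ τ : ℝ, (∀ B : Finset ℕ, (∀ i ∈ B, i ≤ 2*n) →
      (∀ i ∈ B, ∃ p, x i ≤ p ∧ p < x (i+1) ∧ f p = τ) → B.card ≤ n) := by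
    intro τ B hBr hBp
    set gτ : ℝ → ℝ := fun t => f t - τ with hgτ
    have hgc : ContDiff ℝ (k : ℕ) gτ := by
      apply ContDiff.sub _ contDiff_const
      apply hf.of_le
      exact_mod_cast (by exact_mod_cast Nat.le_succ_of_le hkn : (k : ℕ∞) ≤ (n:ℕ∞) + 1)
    have hgd : iteratedDeriv k gτ = iteratedDeriv k f := by
      have hder : (deriv fun t => f t - τ) = deriv f := funext fun t => deriv_sub_const τ
      rw [hk, iteratedDeriv_succ', iteratedDeriv_succ', hgτ]
      rw [hder]
    obtain ⟨hZfin, hZcard⟩ := zeros_card_le hgc (u := u) (v := v)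
      (fun y hy => by rw [hgd]; exact hne y hy)
    set Z := {t | t ∈ Icc u v ∧ gτ t = 0} with hZ
    set ψ : ℕ → ℝ := fun i =>
      if h : ∃ p, x i ≤ p ∧ p < x (i+1) ∧ f p = τ then h.choose else 0 with hψ
    have hψspec : ∀ i ∈ B, x i ≤ ψ i ∧ ψ i < x (i+1) ∧ f (ψ i) = τ := by
      intro i hi
      have h := hBp i hi
      simp only [hψ, dif_pos h]
      exact h.choose_spec
    have hψZ : ∀ i ∈ B, ψ i ∈ Z := by
      intro i hi
      obtain ⟨h1, h2, h3⟩ := hψspec i hi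
      have hxi := (hxmem i).2
      have hxi1 := (hxmem (i+1)).2
      exact ⟨⟨le_trans hxi.1 h1, le_trans (le_of_lt h2) hxi1.2⟩, by simp [hgτ, h3]⟩
    have hψinj : Set.InjOn ψ ↑B := by
      intro i hi j hj hij
      have hi2 := hBr i hi
      have hj2 := hBr j hj
      by_contra hne'
      rcases Nat.lt_or_ge i j with h | h
      · have h1 := (hψspec i hi).2.1
        have h2 := (hψspec j hj).1
        have h3 : x (i+1) ≤ x j := by
          rcases eq_or_lt_of_le (show i+1 ≤ j by omega) with hh | hh
          · rw [hh]
          · exact le_of_lt (hxmono _ _ hh (by omega))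
        linarith [hij ▸ h1]
      · rcases Nat.lt_or_ge j i with h' | h'
        · have h1 := (hψspec j hj).2.1
          have h2 := (hψspec i hi).1
          have h3 : x (j+1) ≤ x i := by
            rcases eq_or_lt_of_le (show j+1 ≤ i by omega) with hh | hh
            · rw [hh]
            · exact le_of_lt (hxmono _ _ hh (by omega))
          linarith [hij ▸ h1]
        · omega
    have hcard : B.card = ((↑(B.image ψ) : Set ℝ)).ncard := by
      rw [Set.ncard_coe_finset, Finset.card_image_of_injOn hψinj]
    have hsub : (↑(B.image ψ) : Set ℝ) ⊆ Z := by
      intro t ht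
      simp only [Finset.coe_image, Set.mem_image, Finset.mem_coe] at ht
      obtain ⟨i, hi, rfl⟩ := ht
      exact hψZ i hi
    calc B.card = ((↑(B.image ψ) : Set ℝ)).ncard := hcard
      _ ≤ Z.ncard := Set.ncard_le_ncard hsub hZfin
      _ ≤ k := hZcard
      _ ≤ n := hkn
  -- gaps
  have hgap : ∀ i, i ≤ 2*n → ∃ z, x i < z ∧ z < x (i+1) ∧ σ < |f z| := by
    intro i hi
    have h1 : i < i+1 := Nat.lt_succ_self i
    have h2 : i+1 ≤ 2*n+1 := by omega
    exact exists_gap (hxmem i).1 (hxmem (i+1)).1 (hxmono i (i+1) h1 h2) (hxcomp i (i+1) h1 h2)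
  have hcover : ∀ i ∈ Finset.range (2*n+1),
      (∃ p, x i ≤ p ∧ p < x (i+1) ∧ f p = σ) ∨ (∃ p, x i ≤ p ∧ p < x (i+1) ∧ f p = -σ) := by
    intro i hi
    have hi' : i ≤ 2*n := by have := Finset.mem_range.mp hi; omega
    obtain ⟨z, hz1, hz2, hz3⟩ := hgap i hi'
    have hcont : ContinuousOn f (Icc (x i) z) := hf.continuous.continuousOn
    have hfxi : |f (x i)| ≤ σ := (hxmem i).1
    rcases lt_or_ge σ (f z) with hcase | hcase
    · left
      have hiv : σ ∈ f '' Icc (x i) z := by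
        apply intermediate_value_Icc (le_of_lt hz1) hcont
        exact ⟨(abs_le.mp hfxi).2, le_of_lt hcase⟩
      obtain ⟨p, hp, hpσ⟩ := hiv
      refine ⟨p, hp.1, ?_, hpσ⟩
      have : p ≠ z := fun hh => by rw [hh] at hpσ; linarith
      exact lt_of_lt_of_le (lt_of_le_of_ne hp.2 this) (le_of_lt hz2)
    · right
      have hzneg : f z < -σ := by
        rcases abs_cases (f z) with ⟨h1, _⟩ | ⟨h1, _⟩
        · linarith [hz3, h1 ▸ hz3]
        · linarith [h1 ▸ hz3]
      have hiv : -σ ∈ f '' Icc (x i) z := by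
        apply intermediate_value_Icc' (le_of_lt hz1) hcont
        exact ⟨le_of_lt hzneg, (abs_le.mp hfxi).1⟩
      obtain ⟨p, hp, hpσ⟩ := hiv
      refine ⟨p, hp.1, ?_, hpσ⟩
      have : p ≠ z := fun hh => by rw [hh] at hpσ; linarith
      exact lt_of_lt_of_le (lt_of_le_of_ne hp.2 this) (le_of_lt hz2)
  -- pigeonhole
  set BA : Finset ℕ := (Finset.range (2*n+1)).filter
    (fun i => ∃ p, x i ≤ p ∧ p < x (i+1) ∧ f p = σ) with hBA
  set BB : Finset ℕ := (Finset.range (2*n+1)).filter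
    (fun i => ∃ p, x i ≤ p ∧ p < x (i+1) ∧ f p = -σ) with hBB
  have hunion : Finset.range (2*n+1) ⊆ BA ∪ BB := by
    intro i hi
    rcases hcover i hi with h | h
    · exact Finset.mem_union_left _ (Finset.mem_filter.mpr ⟨hi, h⟩)
    · exact Finset.mem_union_right _ (Finset.mem_filter.mpr ⟨hi, h⟩)
  have hcard : 2*n+1 ≤ BA.card + BB.card := by
    calc 2*n+1 = (Finset.range (2*n+1)).card := (Finset.card_range _).symm
      _ ≤ (BA ∪ BB).card := Finset.card_le_card hunion
      _ ≤ BA.card + BB.card := Finset.card_union_le _ _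
  have hAle : BA.card ≤ n := by
    apply final σ BA
    · intro i hi
      have := Finset.mem_range.mp (Finset.mem_filter.mp hi).1; omega
    · exact fun i hi => (Finset.mem_filter.mp hi).2
  have hBle : BB.card ≤ n := by
    apply final (-σ) BB
    · intro i hi
      have := Finset.mem_range.mp (Finset.mem_filter.mp hi).1; omega
    · exact fun i hi => (Finset.mem_filter.mp hi).2
  omega

/-- Lemma 5(a) of Molchanov--Vainberg: for a `C^{n+1}` function `f` with
`‖f‖_{C^{n+1}} ≤ A⁺` and `∑_{k=0}^n |f^{(k)}(x)| ≥ A⁻ > 0` everywhere, there is a constant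
`c > 0` depending only on `A⁺, A⁻, n` such that for every `0 < σ ≤ A⁻/2` and every bounded
interval `Δ = [a,b]`, the number of connected components of `Γ_σ = {x : |f x| ≤ σ}` meeting
`Δ` is finite and bounded by `c(|Δ| + 1)`. -/
theorem components_count_bound (n : ℕ) (hn : 1 ≤ n) (Aplus Aminus : ℝ)
    (hAminus : 0 < Aminus) :
    ∃ c : ℝ, 0 < c ∧
      ∀ f : ℝ → ℝ, ContDiff ℝ (n + 1) f →
        (∀ x : ℝ, ∑ k ∈ Finset.range (n + 2), |iteratedDeriv k f x| ≤ Aplus) →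
        (∀ x : ℝ, Aminus ≤ ∑ k ∈ Finset.range (n + 1), |iteratedDeriv k f x|) →
        ∀ σ : ℝ, 0 < σ → σ ≤ Aminus / 2 →
        ∀ a b : ℝ, a ≤ b →
          {C : Set ℝ | ∃ x ∈ {y : ℝ | |f y| ≤ σ} ∩ Icc a b,
              C = connectedComponentIn {y : ℝ | |f y| ≤ σ} x}.Finite ∧
          ({C : Set ℝ | ∃ x ∈ {y : ℝ | |f y| ≤ σ} ∩ Icc a b,
              C = connectedComponentIn {y : ℝ | |f y| ≤ σ} x}.ncard : ℝ)
            ≤ c * ((b - a) + 1) := by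
  classical
  set A : ℝ := max Aplus Aminus with hAdef
  have hA : 0 < A := lt_of_lt_of_le hAminus (le_max_right _ _)
  set δ : ℝ := Aminus / (4 * n * A) with hδdef
  have hn' : (1:ℝ) ≤ (n:ℝ) := by exact_mod_cast hn
  have hδ : 0 < δ := by apply div_pos hAminus; positivity
  refine ⟨(2*n+2) * (1/δ + 1), by positivity, ?_⟩
  intro f hf hplus hminus σ hσ hσA a b hab
  set Γ : Set ℝ := {y : ℝ | |f y| ≤ σ} with hΓ
  have hbd : ∀ k, k ≤ n + 1 → ∀ x : ℝ, |iteratedDeriv k f x| ≤ A := by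
    intro k hk x
    have h1 : |iteratedDeriv k f x| ≤ ∑ j ∈ Finset.range (n+2), |iteratedDeriv j f x| :=
      Finset.single_le_sum (f := fun j => |iteratedDeriv j f x|)
        (fun j _ => abs_nonneg _) (Finset.mem_range.mpr (by omega))
    exact le_trans (le_trans h1 (hplus x)) (le_max_left _ _)
  set N : ℕ := ⌊(b - a) / δ⌋₊ + 1 with hN
  set SI : ℕ → Set (Set ℝ) := fun i =>
    {C : Set ℝ | ∃ x ∈ Γ ∩ Icc (a + (i:ℝ) * δ) (a + ((i:ℝ)+1) * δ),
      C = connectedComponentIn Γ x} with hSI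
  have hclaim : ∀ i : ℕ, (SI i).Finite ∧ (SI i).ncard ≤ 2*n+1 := by
    intro i
    apply finite_and_ncard_le_of_finset_bound
    intro T hT
    apply interval_claim n hn Aminus A hAminus hA f hf hbd hminus σ hσ hσA
      (a + (i:ℝ) * δ) (a + ((i:ℝ)+1) * δ) (by rw [hδdef] at hδ ⊢; linarith [hδ]) T
    exact hT
  set S := {C : Set ℝ | ∃ x ∈ Γ ∩ Icc a b, C = connectedComponentIn Γ x} with hS
  have hcover : S ⊆ ⋃ i ∈ Finset.range N, SI i := by
    intro C hC
    obtain ⟨x, ⟨hxΓ, hxab⟩, rfl⟩ := hC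
    set i : ℕ := ⌊(x - a) / δ⌋₊ with hi
    have hxa : 0 ≤ x - a := by linarith [hxab.1]
    have hiN : i < N := by
      have h1 : (x - a)/δ ≤ (b - a)/δ := by gcongr; linarith [hxab.2]
      have h2 := Nat.floor_le_floor h1
      omega
    have hfl1 : (i:ℝ) ≤ (x - a)/δ := Nat.floor_le (div_nonneg hxa hδ.le)
    have hfl2 : (x - a)/δ < (i:ℝ) + 1 := Nat.lt_floor_add_one _
    refine Set.mem_biUnion (Finset.mem_range.mpr hiN) ?_
    refine ⟨x, ⟨hxΓ, ?_, ?_⟩, rfl⟩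
    · have : (i:ℝ) * δ ≤ x - a := by rwa [← le_div_iff₀ hδ]
      linarith
    · have : x - a < ((i:ℝ)+1) * δ := by rwa [div_lt_iff₀ hδ] at hfl2
      linarith
  have hfinU : (⋃ i ∈ Finset.range N, SI i).Finite :=
    Set.Finite.biUnion (Finset.range N).finite_toSet (fun i _ => (hclaim i).1)
  have hSfin : S.Finite := hfinU.subset hcover
  refine ⟨hSfin, ?_⟩
  set U : Finset (Set ℝ) := (Finset.range N).biUnion (fun i => (hclaim i).1.toFinset) with hU
  have hUeq : (↑U : Set (Set ℝ)) = ⋃ i ∈ Finset.range N, SI i := by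
    rw [hU, Finset.coe_biUnion]
    simp [Set.Finite.coe_toFinset]
  have hle1 : S.ncard ≤ N * (2*n+1) := by
    calc S.ncard ≤ (↑U : Set (Set ℝ)).ncard := by
          rw [hUeq]; exact Set.ncard_le_ncard hcover hfinU
      _ = U.card := Set.ncard_coe_finset U
      _ ≤ ∑ i ∈ Finset.range N, ((hclaim i).1.toFinset).card := Finset.card_biUnion_le
      _ ≤ ∑ _i ∈ Finset.range N, (2*n+1) := by
          apply Finset.sum_le_sum
          intro i _
          rw [← Set.ncard_eq_toFinset_card (SI i) (hclaim i).1]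
          exact (hclaim i).2
      _ = N * (2*n+1) := by rw [Finset.sum_const, Finset.card_range, smul_eq_mul]
  have hNle : (N:ℝ) ≤ (b-a)/δ + 1 := by
    rw [hN]
    push_cast
    have := Nat.floor_le (div_nonneg (by linarith : (0:ℝ) ≤ b - a) hδ.le)
    linarith
  have hd : (0:ℝ) < 1/δ := by positivity
  have hL : (0:ℝ) ≤ b - a := by linarith
  have hkey : (b-a)/δ = (b-a) * (1/δ) := by ring
  have hcast : (S.ncard : ℝ) ≤ (N:ℝ) * (2*(n:ℝ)+1) := by
    have := hle1
    exact_mod_cast (by exact_mod_cast hle1 : (S.ncard:ℝ) ≤ ((N * (2*n+1) : ℕ) : ℝ))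
  calc (S.ncard : ℝ) ≤ (N:ℝ) * (2*(n:ℝ)+1) := hcast
    _ ≤ ((b-a)/δ + 1) * (2*(n:ℝ)+1) := by
        apply mul_le_mul_of_nonneg_right hNle (by positivity)
    _ ≤ (2*(n:ℝ)+2) * (1/δ + 1) * ((b - a) + 1) := by
        rw [hkey]
        nlinarith [mul_nonneg hL (le_of_lt hd), hd, hL, hn']
end

section
/- Let n ≥ 1 and let f : ℝ → ℝ be of class C^{n+1} with ‖f‖_{C^{n+1}} := Σ_{k=0}^{n+1} sup_x |f^{(k)}(x)| = A⁺ < ∞ and Σ_{k=0}^{n} |f^{(k)}(x)| ≥ A⁻ > 0 for all x ∈ ℝ. Then there exists a constant c > 0 depending only on A⁺, A⁻ and n such that for every σ with 0 < σ ≤ A⁻/2 and every bounded interval Δ ⊂ ℝ, the Lebesgue measure of Γ_σ ∩ Δ = {x ∈ Δ : |f(x)| ≤ σ} is at most c(|Δ| + 1)σ^{1/n}, where |Δ| denotes the length of Δ. -/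
open Set MeasureTheory

set_option maxHeartbeats 1000000

private lemma vdc : ∀ k : ℕ, 1 ≤ k → ∀ g : ℝ → ℝ, ContDiff ℝ k g →
    ∀ lam σ c d : ℝ, 0 < lam → 0 < σ →
    (∀ y ∈ Icc c d, lam ≤ |iteratedDeriv k g y|) →
    volume ({y : ℝ | |g y| ≤ σ} ∩ Icc c d)
      ≤ ENNReal.ofReal ((4:ℝ)^k * (σ/lam) ^ (1/(k:ℝ))) := by
  intro k
  induction k with
  | zero => omega
  | succ m IH =>
    intro _ g hg lam σ c d hlam hσ habs
    have hrhs0 : (0:ℝ) ≤ (4:ℝ)^(m+1) * (σ/lam) ^ (1/((m+1:ℕ):ℝ)) := by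
      positivity
    have key : ∀ G : ℝ → ℝ, ContDiff ℝ (m+1 : ℕ) G →
        (∀ y ∈ Icc c d, lam ≤ iteratedDeriv (m+1) G y) →
        volume ({y : ℝ | |G y| ≤ σ} ∩ Icc c d)
          ≤ ENNReal.ofReal ((4:ℝ)^(m+1) * (σ/lam) ^ (1/((m+1:ℕ):ℝ))) := by
      intro G hG hsgn
      rcases lt_or_ge d c with hdc | hcd
      · rw [Icc_eq_empty (not_le.mpr hdc)]
        simp
      have hEG : ∀ y : ℝ, y ∈ {y : ℝ | |G y| ≤ σ} ↔ |G y| ≤ σ := fun y => Iff.rfl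
      rcases Nat.eq_zero_or_pos m with hm | hm
      · -- base case m = 0, k = 1
        subst hm
        have hder : ∀ y ∈ Icc c d, lam ≤ deriv G y := by
          intro y hy; have := hsgn y hy; rwa [iteratedDeriv_one] at this
        have hdiff : Differentiable ℝ G := hG.differentiable (by simp)
        have mvt : ∀ x ∈ Icc c d, ∀ y ∈ Icc c d, x ≤ y → lam * (y - x) ≤ G y - G x := by
          intro x hx y hy hxy
          exact (convex_Icc c d).mul_sub_le_image_sub_of_le_deriv
            hdiff.continuous.continuousOn hdiff.differentiableOn
            (fun z hz => hder z (interior_subset hz)) x hx y hy hxy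
        rcases eq_empty_or_nonempty ({y : ℝ | |G y| ≤ σ} ∩ Icc c d) with hE | ⟨x0, hx0E, hx0I⟩
        · rw [hE]; simp
        have hx0 : |G x0| ≤ σ := hx0E
        have hsl : (0:ℝ) ≤ 2*σ/lam := by positivity
        have hsub : {y : ℝ | |G y| ≤ σ} ∩ Icc c d ⊆ Icc (x0 - 2*σ/lam) (x0 + 2*σ/lam) := by
          rintro y ⟨hyE, hyI⟩
          have hy : |G y| ≤ σ := hyE
          rcases abs_le.mp hx0 with ⟨hx1, hx2⟩
          rcases abs_le.mp hy with ⟨hy1, hy2⟩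
          rcases le_total y x0 with h | h
          · have := mvt y hyI x0 hx0I h
            have h2 : x0 - y ≤ 2*σ/lam := by
              rw [le_div_iff₀ hlam]; nlinarith
            exact ⟨by linarith, by linarith⟩
          · have := mvt x0 hx0I y hyI h
            have h2 : y - x0 ≤ 2*σ/lam := by
              rw [le_div_iff₀ hlam]; nlinarith
            exact ⟨by linarith, by linarith⟩
        calc volume ({y : ℝ | |G y| ≤ σ} ∩ Icc c d)
            ≤ volume (Icc (x0 - 2*σ/lam) (x0 + 2*σ/lam)) := measure_mono hsub
          _ = ENNReal.ofReal (4*σ/lam) := by rw [Real.volume_Icc]; congr 1; ring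
          _ ≤ _ := by
              apply ENNReal.ofReal_le_ofReal
              have he : (1/(((0:ℕ)+1:ℕ):ℝ)) = 1 := by norm_num
              rw [he, Real.rpow_one]
              exact le_of_eq (by ring)
      · -- inductive step, m ≥ 1
        have hm1 : 1 ≤ m := hm
        have hmR : (1:ℝ) ≤ (m:ℝ) := by exact_mod_cast hm1
        set p := iteratedDeriv m G with hpdef
        have hpc : Continuous p := hG.continuous_iteratedDeriv m (by exact_mod_cast Nat.le_succ m)
        have hpd : Differentiable ℝ p := hG.differentiable_iteratedDeriv m (by exact_mod_cast Nat.lt_succ_self m)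
        have hderiv : ∀ y : ℝ, deriv p y = iteratedDeriv (m+1) G y := by
          intro y; rw [iteratedDeriv_succ]
        have mvt : ∀ x ∈ Icc c d, ∀ y ∈ Icc c d, x ≤ y → lam * (y - x) ≤ p y - p x := by
          intro x hx y hy hxy
          exact (convex_Icc c d).mul_sub_le_image_sub_of_le_deriv
            hpc.continuousOn hpd.differentiableOn
            (fun z hz => by rw [hderiv]; exact hsgn z (interior_subset hz)) x hx y hy hxy
        set β := σ / lam with hβdef
        have hβ : 0 < β := div_pos hσ hlam
        set t := β ^ (1/((m:ℝ)+1)) with htdef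
        have ht : 0 < t := Real.rpow_pos_of_pos hβ _
        set μ := lam * t with hμdef
        have hμ : 0 < μ := mul_pos hlam ht
        have hIHb : (σ/μ) ^ (1/(m:ℝ)) = t := by
          have hm0 : (m:ℝ) ≠ 0 := by linarith
          have h1 : σ/μ = β ^ (1 - 1/((m:ℝ)+1)) := by
            rw [Real.rpow_sub hβ, Real.rpow_one, ← htdef, hμdef, hβdef]
            field_simp
          rw [h1, ← Real.rpow_mul hβ.le, htdef]
          congr 1
          field_simp
          ring
        have hcd' : ContDiff ℝ (m:ℕ) G := hG.of_le (by exact_mod_cast Nat.le_succ m)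
        -- construct u
        obtain ⟨u, huI, huVol, huP⟩ : ∃ u ∈ Icc c d,
            volume ({y : ℝ | |G y| ≤ σ} ∩ Icc c u) ≤ ENNReal.ofReal ((4:ℝ)^m * t) ∧
            ∀ y ∈ Icc c d, u < y → -μ < p y := by
          by_cases h1 : (Icc c d ∩ p ⁻¹' Iic (-μ)).Nonempty
          · have hScp : IsCompact (Icc c d ∩ p ⁻¹' Iic (-μ)) :=
              isCompact_Icc.inter_right (isClosed_Iic.preimage hpc)
            have husm := hScp.sSup_mem h1
            set u := sSup (Icc c d ∩ p ⁻¹' Iic (-μ)) with hudef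
            obtain ⟨huI, hupu⟩ := husm
            have hupu : p u ≤ -μ := hupu
            refine ⟨u, huI, ?_, ?_⟩
            · have habs' : ∀ y ∈ Icc c u, μ ≤ |iteratedDeriv m G y| := by
                intro y hy
                have hyI : y ∈ Icc c d := ⟨hy.1, hy.2.trans huI.2⟩
                have h3 := mvt y hyI u huI hy.2
                have h4 : (0:ℝ) ≤ lam * (u - y) :=
                  mul_nonneg hlam.le (by linarith [hy.2])
                have h5 : p y ≤ -μ := by nlinarith
                rw [← hpdef]
                rw [abs_of_nonpos (by linarith)]
                linarith
              have := IH hm1 G hcd' μ σ c u hμ hσ habs'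
              refine this.trans (le_of_eq ?_)
              rw [hIHb]
            · intro y hyI hy
              by_contra hcon
              push_neg at hcon
              have hymem : y ∈ Icc c d ∩ p ⁻¹' Iic (-μ) := ⟨hyI, hcon⟩
              have := le_csSup hScp.bddAbove hymem
              rw [← hudef] at this
              linarith
          · rw [not_nonempty_iff_eq_empty] at h1
            refine ⟨c, left_mem_Icc.mpr hcd, ?_, ?_⟩
            · have : volume ({y : ℝ | |G y| ≤ σ} ∩ Icc c c) ≤ volume ({c} : Set ℝ) := by
                apply measure_mono; rw [Icc_self]; exact inter_subset_right
              rw [Real.volume_singleton] at this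
              exact this.trans (by positivity)
            · intro y hyI hy
              by_contra hcon
              push_neg at hcon
              have : y ∈ Icc c d ∩ p ⁻¹' Iic (-μ) := ⟨hyI, hcon⟩
              rw [h1] at this
              exact this
        -- construct v
        obtain ⟨v, hvI, hvVol, hvP⟩ : ∃ v ∈ Icc c d,
            volume ({y : ℝ | |G y| ≤ σ} ∩ Icc v d) ≤ ENNReal.ofReal ((4:ℝ)^m * t) ∧
            ∀ y ∈ Icc c d, y < v → p y < μ := by
          by_cases h1 : (Icc c d ∩ p ⁻¹' Ici μ).Nonempty
          · have hScp : IsCompact (Icc c d ∩ p ⁻¹' Ici μ) :=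
              isCompact_Icc.inter_right (isClosed_Ici.preimage hpc)
            have hvsm := hScp.sInf_mem h1
            set v := sInf (Icc c d ∩ p ⁻¹' Ici μ) with hvdef
            obtain ⟨hvI, hvpv⟩ := hvsm
            have hvpv : μ ≤ p v := hvpv
            refine ⟨v, hvI, ?_, ?_⟩
            · have habs' : ∀ y ∈ Icc v d, μ ≤ |iteratedDeriv m G y| := by
                intro y hy
                have hyI : y ∈ Icc c d := ⟨hvI.1.trans hy.1, hy.2⟩
                have h3 := mvt v hvI y hyI hy.1
                have h4 : (0:ℝ) ≤ lam * (y - v) :=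
                  mul_nonneg hlam.le (by linarith [hy.1])
                rw [← hpdef, abs_of_nonneg (by linarith)]
                linarith
              have := IH hm1 G hcd' μ σ v d hμ hσ habs'
              refine this.trans (le_of_eq ?_)
              rw [hIHb]
            · intro y hyI hy
              by_contra hcon
              push_neg at hcon
              have hymem : y ∈ Icc c d ∩ p ⁻¹' Ici μ := ⟨hyI, hcon⟩
              have := csInf_le hScp.bddBelow hymem
              rw [← hvdef] at this
              linarith
          · rw [not_nonempty_iff_eq_empty] at h1
            refine ⟨d, right_mem_Icc.mpr hcd, ?_, ?_⟩
            · have : volume ({y : ℝ | |G y| ≤ σ} ∩ Icc d d) ≤ volume ({d} : Set ℝ) := by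
                apply measure_mono; rw [Icc_self]; exact inter_subset_right
              rw [Real.volume_singleton] at this
              exact this.trans (by positivity)
            · intro y hyI hy
              by_contra hcon
              push_neg at hcon
              have : y ∈ Icc c d ∩ p ⁻¹' Ici μ := ⟨hyI, hcon⟩
              rw [h1] at this
              exact this
        -- middle interval bound
        have hmid : v - u ≤ 2*μ/lam := by
          by_contra hcon
          push_neg at hcon
          have hA : 2*μ < (v - u) * lam := (div_lt_iff₀ hlam).mp hcon
          have hml : 0 < 2*μ/lam := by positivity
          have huv : u < v := by
            rcases lt_or_ge u v with h | h
            · exact h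
            · exfalso; have : v - u ≤ 0 := by linarith
              linarith
          set ε := (v - u - 2*μ/lam)/4 with hεdef
          have hε0 : 0 < ε := by
            have : 2*μ/lam < v - u := hcon
            rw [hεdef]; linarith
          have hlamε : lam * ε = (lam*(v-u) - 2*μ)/4 := by
            rw [hεdef]; field_simp
          have hord : u + ε ≤ v - ε := by
            have : 4*ε ≤ v - u := by rw [hεdef]; linarith
            linarith
          have hu' : u + ε ∈ Icc c d := ⟨huI.1.trans (by linarith), by
            have := hvI.2; linarith⟩
          have hv' : v - ε ∈ Icc c d := ⟨huI.1.trans (by linarith), by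
            have := hvI.2; linarith⟩
          have h1 := huP (u+ε) hu' (by linarith)
          have h2 := hvP (v-ε) hv' (by linarith)
          have h3 := mvt (u+ε) hu' (v-ε) hv' hord
          nlinarith
        -- cover
        have hcover : {y : ℝ | |G y| ≤ σ} ∩ Icc c d ⊆
            ({y : ℝ | |G y| ≤ σ} ∩ Icc c u) ∪ (Icc u v ∪ ({y : ℝ | |G y| ≤ σ} ∩ Icc v d)) := by
          rintro y ⟨hyE, hyI⟩
          rcases le_total y u with h | h
          · exact Or.inl ⟨hyE, hyI.1, h⟩
          rcases le_total y v with h' | h'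
          · exact Or.inr (Or.inl ⟨h, h'⟩)
          · exact Or.inr (Or.inr ⟨hyE, h', hyI.2⟩)
        have hc4t : (0:ℝ) ≤ (4:ℝ)^m * t := by positivity
        have hc2μ : (0:ℝ) ≤ 2*μ/lam := by positivity
        calc volume ({y : ℝ | |G y| ≤ σ} ∩ Icc c d)
            ≤ volume (({y : ℝ | |G y| ≤ σ} ∩ Icc c u) ∪
                (Icc u v ∪ ({y : ℝ | |G y| ≤ σ} ∩ Icc v d))) := measure_mono hcover
          _ ≤ volume ({y : ℝ | |G y| ≤ σ} ∩ Icc c u) +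
              (volume (Icc u v) + volume ({y : ℝ | |G y| ≤ σ} ∩ Icc v d)) :=
              (measure_union_le _ _).trans (by gcongr; exact measure_union_le _ _)
          _ ≤ ENNReal.ofReal ((4:ℝ)^m * t) +
              (ENNReal.ofReal (2*μ/lam) + ENNReal.ofReal ((4:ℝ)^m * t)) := by
              gcongr
              rw [Real.volume_Icc]
              exact ENNReal.ofReal_le_ofReal hmid
          _ = ENNReal.ofReal ((4:ℝ)^m * t + (2*μ/lam + (4:ℝ)^m * t)) := by
              rw [ENNReal.ofReal_add hc4t (add_nonneg hc2μ hc4t), ENNReal.ofReal_add hc2μ hc4t]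
          _ ≤ _ := by
              apply ENNReal.ofReal_le_ofReal
              have hcast : (((m+1:ℕ)):ℝ) = (m:ℝ)+1 := by push_cast; ring
              rw [hcast, ← htdef]
              have hμt : 2*μ/lam = 2*t := by
                rw [hμdef]; field_simp
              rw [hμt]
              have h4 : (1:ℝ) ≤ (4:ℝ)^m := one_le_pow₀ (by norm_num)
              have : (4:ℝ)^(m+1) = 4 * (4:ℝ)^m := by ring
              rw [this]
              nlinarith
    -- sign dichotomy
    have hcont : Continuous (iteratedDeriv (m+1) g) :=
      hg.continuous_iteratedDeriv (m+1) le_rfl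
    have dich : (∀ y ∈ Icc c d, lam ≤ iteratedDeriv (m+1) g y) ∨
        (∀ y ∈ Icc c d, lam ≤ iteratedDeriv (m+1) (fun x => -(g x)) y) := by
      by_contra hcon
      push_neg at hcon
      obtain ⟨⟨y0, hy0, h0⟩, ⟨y1, hy1, h1⟩⟩ := hcon
      rw [iteratedDeriv_fun_neg] at h1
      have a0 : iteratedDeriv (m+1) g y0 ≤ -lam := by
        have := habs y0 hy0
        rcases le_abs.mp this with h | h
        · linarith
        · linarith
      have a1 : lam ≤ iteratedDeriv (m+1) g y1 := by
        have := habs y1 hy1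
        rcases le_abs.mp this with h | h
        · linarith
        · linarith
      have hsub : uIcc y0 y1 ⊆ Icc c d := uIcc_subset_Icc hy0 hy1
      have : (0:ℝ) ∈ Icc (iteratedDeriv (m+1) g y0) (iteratedDeriv (m+1) g y1) :=
        ⟨by linarith, by linarith⟩
      obtain ⟨z, hz, hz0⟩ := intermediate_value_uIcc (hcont.continuousOn) (Icc_subset_uIcc this)
      have := habs z (hsub hz)
      rw [hz0] at this
      simp at this
      linarith
    rcases dich with h | h
    · exact key g hg h
    · have := key (fun x => -(g x)) hg.neg h
      simpa [abs_neg] using this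

/-- Lemma 5 of Molchanov--Vainberg, combined form: for a `C^{n+1}` function `f` with
`‖f‖_{C^{n+1}} ≤ A⁺` and `∑_{k=0}^n |f^{(k)}(x)| ≥ A⁻ > 0` everywhere, there is a constant
`c > 0` depending only on `A⁺, A⁻, n` such that for every `0 < σ ≤ A⁻/2` and every bounded
interval `Δ = [a,b]`, the Lebesgue measure of `{x ∈ Δ : |f x| ≤ σ}` is at most
`c (|Δ| + 1) σ^{1/n}`. -/
theorem sublevel_measure_bound (n : ℕ) (hn : 1 ≤ n) (Aplus Aminus : ℝ)
    (hAminus : 0 < Aminus) :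
    ∃ c : ℝ, 0 < c ∧
      ∀ f : ℝ → ℝ, ContDiff ℝ (n + 1) f →
        (∀ x : ℝ, ∑ k ∈ Finset.range (n + 2), |iteratedDeriv k f x| ≤ Aplus) →
        (∀ x : ℝ, Aminus ≤ ∑ k ∈ Finset.range (n + 1), |iteratedDeriv k f x|) →
        ∀ σ : ℝ, 0 < σ → σ ≤ Aminus / 2 →
        ∀ a b : ℝ, a ≤ b →
          volume ({y : ℝ | |f y| ≤ σ} ∩ Icc a b)
            ≤ ENNReal.ofReal (c * ((b - a) + 1) * σ ^ (1 / (n : ℝ))) := by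
  have hnR : (1:ℝ) ≤ (n:ℝ) := by exact_mod_cast hn
  have h2n : (0:ℝ) < 2*(n:ℝ) := by linarith
  set lam := Aminus / (2*(n:ℝ)) with hlamdef
  have hlam : 0 < lam := div_pos hAminus h2n
  set A := max Aplus 1 with hAdef
  have hA : (0:ℝ) < A := lt_of_lt_of_le one_pos (le_max_right _ _)
  set r := lam / (2*A) with hrdef
  have hr : 0 < r := div_pos hlam (by positivity)
  set C1 := max (2/lam) 1 with hC1def
  have hC1 : (0:ℝ) < C1 := lt_of_lt_of_le one_pos (le_max_right _ _)
  set C2 := max 1 (Aminus/2) with hC2def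
  have hC2 : (0:ℝ) < C2 := lt_of_lt_of_le one_pos (le_max_left _ _)
  set K := (4:ℝ)^n * C1 * C2 with hKdef
  have hK : 0 < K := by positivity
  set M := max (1/r) 2 with hMdef
  have hM : (0:ℝ) < M := lt_of_lt_of_le two_pos (le_max_right _ _)
  refine ⟨M * K, by positivity, ?_⟩
  intro f hf hup hlow σ hσ hσ2 a b hab
  set E := {y : ℝ | |f y| ≤ σ} with hEdef
  have hder_le : ∀ k, k ≤ n+1 → ∀ x : ℝ, |iteratedDeriv k f x| ≤ A := by
    intro k hk x
    have hmem : k ∈ Finset.range (n+2) := Finset.mem_range.mpr (by omega)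
    have h1 : |iteratedDeriv k f x| ≤ ∑ j ∈ Finset.range (n+2), |iteratedDeriv j f x| :=
      Finset.single_le_sum (f := fun j => |iteratedDeriv j f x|) (fun j _ => abs_nonneg _) hmem
    exact le_trans (h1.trans (hup x)) (le_max_left _ _)
  -- per interval bound
  have per : ∀ s : ℝ, volume (E ∩ Icc s (s+r)) ≤ ENNReal.ofReal (K * σ ^ (1/(n:ℝ))) := by
    intro s
    rcases eq_empty_or_nonempty (E ∩ Icc s (s+r)) with hE | ⟨x, hxE, hxI⟩
    · rw [hE]; simp
    have hxσ : |f x| ≤ σ := hxE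
    -- find a large derivative at x
    obtain ⟨j, hj1, hjn, hjlarge⟩ : ∃ j, 1 ≤ j ∧ j ≤ n ∧ lam ≤ |iteratedDeriv j f x| := by
      by_contra hcon
      push_neg at hcon
      have hlow' := hlow x
      rw [Finset.sum_range_succ'] at hlow'
      have h0 : |iteratedDeriv 0 f x| ≤ σ := by rw [iteratedDeriv_zero]; exact hxσ
      have hstep : ∑ i ∈ Finset.range n, |iteratedDeriv (i+1) f x| <
          ∑ i ∈ Finset.range n, lam := by
        apply Finset.sum_lt_sum_of_nonempty
        · rw [Finset.nonempty_range_iff]; omega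
        · intro i hi
          rw [Finset.mem_range] at hi
          exact hcon (i+1) (by omega) (by omega)
      rw [Finset.sum_const, Finset.card_range, nsmul_eq_mul] at hstep
      have hnl : (n:ℝ) * lam = Aminus / 2 := by
        rw [hlamdef]; field_simp
      rw [hnl] at hstep
      linarith
    have hjR : (1:ℝ) ≤ (j:ℝ) := by exact_mod_cast hj1
    have hjnR : (j:ℝ) ≤ (n:ℝ) := by exact_mod_cast hjn
    -- derivative stays large on the interval
    have hlip : ∀ y ∈ Icc s (s+r), lam/2 ≤ |iteratedDeriv j f y| := by
      intro y hy
      have hdiffj : ∀ z : ℝ, DifferentiableAt ℝ (iteratedDeriv j f) z := by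
        intro z
        exact (hf.differentiable_iteratedDeriv j (by exact_mod_cast Nat.lt_succ_of_le hjn)) z
      have hbound : ∀ z ∈ (univ : Set ℝ), ‖deriv (iteratedDeriv j f) z‖ ≤ A := by
        intro z _
        rw [← iteratedDeriv_succ, Real.norm_eq_abs]
        exact hder_le (j+1) (by omega) z
      have hdy : ‖iteratedDeriv j f y - iteratedDeriv j f x‖ ≤ A * ‖y - x‖ :=
        convex_univ.norm_image_sub_le_of_norm_deriv_le (fun z _ => hdiffj z) hbound
          (mem_univ x) (mem_univ y)
      rw [Real.norm_eq_abs, Real.norm_eq_abs] at hdy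
      have hxy : |y - x| ≤ r := by
        rw [abs_le]
        constructor <;> [linarith [hy.1, hxI.2]; linarith [hy.2, hxI.1]]
      have hAr : A * |y - x| ≤ lam/2 := by
        have h1 : A * |y - x| ≤ A * r := by gcongr
        have h2 : A * r = lam/2 := by rw [hrdef]; field_simp
        linarith
      have habs2 := abs_sub_abs_le_abs_sub (iteratedDeriv j f x) (iteratedDeriv j f y)
      rw [abs_sub_comm] at habs2
      linarith
    have hcdj : ContDiff ℝ (j:ℕ) f := hf.of_le (by exact_mod_cast Nat.le_succ_of_le hjn)
    have hvdc := vdc j hj1 f hcdj (lam/2) σ s (s+r) (by positivity) hσ hlip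
    refine hvdc.trans (ENNReal.ofReal_le_ofReal ?_)
    -- 4^j * (σ/(lam/2))^(1/j) ≤ K * σ^(1/n)
    have hbase : σ/(lam/2) = (2/lam) * σ := by field_simp
    have hsplit : (σ/(lam/2)) ^ (1/(j:ℝ)) = (2/lam) ^ (1/(j:ℝ)) * σ ^ (1/(j:ℝ)) := by
      rw [hbase, Real.mul_rpow (by positivity) hσ.le]
    have hj_inv : 1/(j:ℝ) ≤ 1 := by
      rw [div_le_one (by linarith)]; linarith
    have hfact1 : (2/lam) ^ (1/(j:ℝ)) ≤ C1 := by
      rcases le_total (2/lam) 1 with h | h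
      · exact le_trans (Real.rpow_le_one (by positivity) h (by positivity)) (le_max_right _ _)
      · calc (2/lam) ^ (1/(j:ℝ)) ≤ (2/lam) ^ (1:ℝ) :=
              Real.rpow_le_rpow_of_exponent_le h hj_inv
          _ = 2/lam := Real.rpow_one _
          _ ≤ C1 := le_max_left _ _
    have hfact2 : σ ^ (1/(j:ℝ)) ≤ C2 * σ ^ (1/(n:ℝ)) := by
      have hexp : 1/(n:ℝ) ≤ 1/(j:ℝ) := by
        apply one_div_le_one_div_of_le (by linarith) hjnR
      rcases le_total σ 1 with h | h
      · have h1 : σ ^ (1/(j:ℝ)) ≤ σ ^ (1/(n:ℝ)) :=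
          Real.rpow_le_rpow_of_exponent_ge hσ h hexp
        have h2 : (1:ℝ) ≤ C2 := le_max_left _ _
        nlinarith [Real.rpow_nonneg hσ.le (1/(n:ℝ))]
      · have h1 : σ ^ (1/(j:ℝ)) ≤ σ ^ (1:ℝ) :=
          Real.rpow_le_rpow_of_exponent_le h hj_inv
        rw [Real.rpow_one] at h1
        have h2 : σ ≤ C2 := le_trans hσ2 (le_max_right _ _)
        have h3 : (1:ℝ) ≤ σ ^ (1/(n:ℝ)) := by
          have := Real.rpow_le_rpow_of_exponent_le h (by positivity : (0:ℝ) ≤ 1/(n:ℝ))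
          rw [Real.rpow_zero] at this
          exact this
        nlinarith
    have hpow : (4:ℝ)^j ≤ (4:ℝ)^n := pow_le_pow_right₀ (by norm_num) hjn
    calc (4:ℝ)^j * (σ/(lam/2)) ^ (1/(j:ℝ))
        = (4:ℝ)^j * ((2/lam) ^ (1/(j:ℝ)) * σ ^ (1/(j:ℝ))) := by rw [hsplit]
      _ ≤ (4:ℝ)^n * (C1 * (C2 * σ ^ (1/(n:ℝ)))) := by
          have h1 : (0:ℝ) ≤ (2/lam) ^ (1/(j:ℝ)) := Real.rpow_nonneg (by positivity) _
          have h2 : (0:ℝ) ≤ σ ^ (1/(j:ℝ)) := Real.rpow_nonneg hσ.le _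
          have h3 : (0:ℝ) ≤ σ ^ (1/(n:ℝ)) := Real.rpow_nonneg hσ.le _
          exact mul_le_mul hpow (mul_le_mul hfact1 hfact2 h2 hC1.le)
            (mul_nonneg h1 h2) (by positivity)
      _ = K * σ ^ (1/(n:ℝ)) := by rw [hKdef]; ring
  -- covering argument
  set N := Nat.ceil ((b-a)/r) + 1 with hNdef
  have hcov : E ∩ Icc a b ⊆ ⋃ i ∈ Finset.range N, (E ∩ Icc (a + i*r) (a + i*r + r)) := by
    rintro y ⟨hyE, hyI⟩
    have h0 : 0 ≤ (y-a)/r := div_nonneg (by linarith [hyI.1]) hr.le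
    have hiN : Nat.floor ((y-a)/r) < N := by
      have h1 : (y-a)/r ≤ (b-a)/r := by gcongr; exact hyI.2
      have h2 := Nat.floor_le_floor h1
      have h3 := Nat.floor_le_ceil ((b-a)/r)
      omega
    refine mem_biUnion (Finset.mem_range.mpr hiN) ⟨hyE, ?_, ?_⟩
    · have h4 := Nat.floor_le h0
      rw [le_div_iff₀ hr] at h4
      linarith
    · have h5 := Nat.lt_floor_add_one ((y-a)/r)
      rw [div_lt_iff₀ hr] at h5
      push_cast at h5 ⊢
      linarith
  have hNle : (N:ℝ) ≤ M * ((b-a) + 1) := by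
    have h1 : ((Nat.ceil ((b-a)/r) : ℕ):ℝ) < (b-a)/r + 1 :=
      Nat.ceil_lt_add_one (div_nonneg (by linarith) hr.le)
    have h2 : (b-a)/r ≤ M * (b-a) := by
      have e1 : (b-a)/r = (1/r)*(b-a) := by ring
      rw [e1]
      exact mul_le_mul_of_nonneg_right (le_max_left _ _) (by linarith)
    have h3 : (2:ℝ) ≤ M := le_max_right _ _
    have hN' : (N:ℝ) = ((Nat.ceil ((b-a)/r) : ℕ):ℝ) + 1 := by rw [hNdef]; push_cast; ring
    nlinarith
  calc volume (E ∩ Icc a b)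
      ≤ ∑ i ∈ Finset.range N, volume (E ∩ Icc (a+i*r) (a+i*r+r)) :=
        (measure_mono hcov).trans (measure_biUnion_finset_le _ _)
    _ ≤ ∑ i ∈ Finset.range N, ENNReal.ofReal (K * σ^(1/(n:ℝ))) :=
        Finset.sum_le_sum (fun i _ => per _)
    _ = (N:ENNReal) * ENNReal.ofReal (K * σ^(1/(n:ℝ))) := by
        rw [Finset.sum_const, Finset.card_range, nsmul_eq_mul]
    _ ≤ ENNReal.ofReal (M * K * ((b-a)+1) * σ^(1/(n:ℝ))) := by
        rw [← ENNReal.ofReal_natCast N, ← ENNReal.ofReal_mul (by positivity)]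
        apply ENNReal.ofReal_le_ofReal
        have h1 : (0:ℝ) ≤ σ^(1/(n:ℝ)) := Real.rpow_nonneg hσ.le _
        have h2 := mul_le_mul_of_nonneg_right hNle (mul_nonneg hK.le h1)
        nlinarith [h2]
end

section
/- Let k ≥ 1, σ > 0, c₂ > 0, h > 0, x₁ ∈ ℝ, and let f : ℝ → ℝ be k-times continuously differentiable on [x₁, x₁ + h] with |f(x)| ≤ σ and |f^{(k)}(x)| ≥ c₂ for all x ∈ [x₁, x₁ + h]. Then h ≤ 2k (σ/c₂)^{1/k}. -/
open Set


lemma sign_const {F : ℝ → ℝ} {a b c : ℝ} (hc : 0 < c)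
    (hcont : ContinuousOn F (Icc a b)) (hF : ∀ x ∈ Icc a b, c ≤ |F x|) :
    (∀ x ∈ Icc a b, c ≤ F x) ∨ (∀ x ∈ Icc a b, F x ≤ -c) := by
  by_contra hcon
  push_neg at hcon
  obtain ⟨⟨x₀, hx₀, h₀⟩, ⟨x₁, hx₁, h₁⟩⟩ := hcon
  have h₀' : F x₀ ≤ -c := by rcases le_abs.mp (hF x₀ hx₀) with h | h <;> linarith
  have h₁' : c ≤ F x₁ := by rcases le_abs.mp (hF x₁ hx₁) with h | h <;> linarith
  have hsub : uIcc x₀ x₁ ⊆ Icc a b := uIcc_subset_Icc hx₀ hx₁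
  have hmem : (0:ℝ) ∈ uIcc (F x₀) (F x₁) := by
    rw [mem_uIcc]; left; constructor <;> linarith
  obtain ⟨z, hz, hz0⟩ := intermediate_value_uIcc (hcont.mono hsub) hmem
  have := hF z (hsub hz)
  rw [hz0] at this
  simp at this
  linarith

lemma key (m : ℕ) : ∀ (F : ℕ → ℝ → ℝ) (a t c σ : ℝ), 0 < t → 0 < c →
    (∀ j < m + 1, ∀ x ∈ Icc a (a + ((m:ℝ) + 1) * t),
      HasDerivWithinAt (F j) (F (j+1) x) (Icc a (a + ((m:ℝ) + 1) * t)) x) →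
    ContinuousOn (F (m+1)) (Icc a (a + ((m:ℝ) + 1) * t)) →
    (∀ x ∈ Icc a (a + ((m:ℝ) + 1) * t), |F 0 x| ≤ σ) →
    (∀ x ∈ Icc a (a + ((m:ℝ) + 1) * t), c ≤ |F (m+1) x|) →
    c * t ^ (m+1) ≤ 2 ^ (m+1) * σ := by
  induction m with
  | zero =>
    intro F a t c σ ht hc hd hcont h0 htop
    have hab : a < a + (((0:ℕ):ℝ) + 1) * t := by push_cast; linarith
    have hcF : ContinuousOn (F 0) (Icc a (a + (((0:ℕ):ℝ) + 1) * t)) :=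
      fun x hx => (hd 0 (by norm_num) x hx).continuousWithinAt
    obtain ⟨ξ, hξ, hslope⟩ := exists_hasDerivAt_eq_slope (F 0) (F 1) hab hcF
      (fun x hx => (hd 0 (by norm_num) x (Ioo_subset_Icc_self hx)).hasDerivAt
        (Icc_mem_nhds hx.1 hx.2))
    have h1 := htop ξ (Ioo_subset_Icc_self hξ)
    rw [hslope] at h1
    have hba : a + (((0:ℕ):ℝ) + 1) * t - a = t := by push_cast; ring
    rw [hba] at h1
    have ha : a ∈ Icc a (a + (((0:ℕ):ℝ) + 1) * t) := ⟨le_refl _, le_of_lt hab⟩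
    have hb : a + (((0:ℕ):ℝ) + 1) * t ∈ Icc a (a + (((0:ℕ):ℝ) + 1) * t) :=
      ⟨le_of_lt hab, le_refl _⟩
    have h2 : |F 0 (a + (((0:ℕ):ℝ) + 1) * t) - F 0 a| ≤ 2 * σ := by
      calc |F 0 (a + (((0:ℕ):ℝ) + 1) * t) - F 0 a|
          ≤ |F 0 (a + (((0:ℕ):ℝ) + 1) * t)| + |F 0 a| := abs_sub _ _
        _ ≤ 2 * σ := by linarith [h0 _ ha, h0 _ hb]
    rw [abs_div, abs_of_pos ht] at h1
    have := (le_div_iff₀ ht).mp h1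
    simpa using le_trans this h2
  | succ m ih =>
    intro F a t c σ ht hc hd hcont h0 htop
    set M : ℝ := (m : ℝ) with hM
    have hcast : ((m+1 : ℕ) : ℝ) + 1 = M + 2 := by push_cast [hM]; ring
    rw [hcast] at hd hcont h0 htop
    set s := Icc a (a + (M + 2) * t) with hs
    set s' := Icc a (a + (M + 1) * t) with hs'
    have hM0 : (0:ℝ) ≤ M := Nat.cast_nonneg m
    have hsub : s' ⊆ s := Icc_subset_Icc le_rfl (by nlinarith)
    have hshift : ∀ x ∈ s', x + t ∈ s := by
      rintro x ⟨hx1, hx2⟩; constructor <;> [linarith; linarith]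
    set G : ℕ → ℝ → ℝ := fun j x => F j (x + t) - F j x with hG
    have hc1 : ContinuousOn (F (m+1)) s :=
      fun x hx => (hd (m+1) (by omega) x hx).continuousWithinAt
    have hd' : ∀ j < m + 1, ∀ x ∈ s', HasDerivWithinAt (G j) (G (j+1) x) s' x := by
      intro j hj x hx
      have hinner : HasDerivWithinAt (fun y => y + t) 1 s' x :=
        (hasDerivWithinAt_id x s').add_const t
      have houter := hd j (by omega) (x + t) (hshift x hx)
      have h1 := houter.comp x hinner (fun y hy => hshift y hy)
      have h2 := (hd j (by omega) x (hsub hx)).mono hsub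
      have h3 := h1.sub h2; rw [mul_one] at h3; exact h3
    have hcont' : ContinuousOn (G (m+1)) s' := by
      apply ContinuousOn.sub
      · exact hc1.comp ((continuous_id.add continuous_const).continuousOn) hshift
      · exact hc1.mono hsub
    have h0' : ∀ x ∈ s', |G 0 x| ≤ 2 * σ := by
      intro x hx
      calc |F 0 (x + t) - F 0 x| ≤ |F 0 (x + t)| + |F 0 x| := abs_sub _ _
        _ ≤ 2 * σ := by linarith [h0 _ (hshift x hx), h0 _ (hsub hx)]
    have htop' : ∀ x ∈ s', c * t ≤ |G (m+1) x| := by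
      intro x hx
      have hxt : x < x + t := lt_add_of_pos_right x ht
      have hIccsub : Icc x (x + t) ⊆ s :=
        Icc_subset_Icc (hsub hx).1 (hshift x hx).2
      obtain ⟨ξ, hξ, hsl⟩ := exists_hasDerivAt_eq_slope (F (m+1)) (F (m+2)) hxt
        (hc1.mono hIccsub)
        (fun y hy => (hd (m+1) (by omega) y (hIccsub (Ioo_subset_Icc_self hy))).hasDerivAt
          (Icc_mem_nhds (lt_of_le_of_lt (hsub hx).1 hy.1)
            (lt_of_lt_of_le hy.2 (hshift x hx).2)))
      have hξs : ξ ∈ s := hIccsub (Ioo_subset_Icc_self hξ)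
      have hsimp : x + t - x = t := by ring
      rw [hsimp] at hsl
      have hGval : G (m+1) x = F (m+2) ξ * t := by
        rw [hsl]; field_simp [hG]; rfl
      rcases sign_const hc hcont htop with hpos | hneg
      · have := hpos ξ hξs
        have hge : c * t ≤ G (m+1) x := by rw [hGval]; nlinarith
        exact le_trans hge (le_abs_self _)
      · have := hneg ξ hξs
        have hge : G (m+1) x ≤ -(c * t) := by rw [hGval]; nlinarith
        calc c * t ≤ -(G (m+1) x) := by linarith
          _ ≤ |G (m+1) x| := neg_le_abs _
    have hkey := ih G a t (c * t) (2 * σ) ht (mul_pos hc ht) hd' hcont' h0' htop'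
    calc c * t ^ (m + 1 + 1) = (c * t) * t ^ (m + 1) := by ring
      _ ≤ 2 ^ (m + 1) * (2 * σ) := hkey
      _ = 2 ^ (m + 1 + 1) * σ := by ring

/-- If `|f| ≤ σ` on `[x₁, x₁ + h]` while `|f^{(k)}| ≥ c₂ > 0` there, then
`h ≤ 2 k (σ/c₂)^{1/k}`. -/
theorem interval_length_bound (k : ℕ) (hk : 1 ≤ k) (σ c₂ h : ℝ)
    (hσ : 0 < σ) (hc₂ : 0 < c₂) (hh : 0 < h) (x₁ : ℝ) (f : ℝ → ℝ)
    (hf : ContDiffOn ℝ k f (Icc x₁ (x₁ + h)))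
    (hfσ : ∀ x ∈ Icc x₁ (x₁ + h), |f x| ≤ σ)
    (hfk : ∀ x ∈ Icc x₁ (x₁ + h), c₂ ≤ |iteratedDerivWithin k f (Icc x₁ (x₁ + h)) x|) :
    h ≤ 2 * k * (σ / c₂) ^ (1 / (k : ℝ)) := by
  obtain ⟨m, rfl⟩ : ∃ m, k = m + 1 := ⟨k - 1, (Nat.succ_pred_eq_of_pos hk).symm⟩
  set s := Icc x₁ (x₁ + h) with hs
  have hud : UniqueDiffOn ℝ s := uniqueDiffOn_Icc (by linarith)
  set t : ℝ := h / (m + 1) with hT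
  have hm1 : (0:ℝ) < (m:ℝ) + 1 := by positivity
  have ht : 0 < t := div_pos hh hm1
  have hht : ((m:ℝ) + 1) * t = h := by rw [hT]; field_simp
  have hseq : Icc x₁ (x₁ + ((m:ℝ) + 1) * t) = s := by rw [hht]
  set F : ℕ → ℝ → ℝ := fun j => iteratedDerivWithin j f s with hF
  have hd : ∀ j < m + 1, ∀ x ∈ s, HasDerivWithinAt (F j) (F (j+1) x) s x := by
    intro j hj x hx
    have hdiff : DifferentiableOn ℝ (iteratedDerivWithin j f s) s :=
      hf.differentiableOn_iteratedDerivWithin (by exact_mod_cast hj) hud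
    have := (hdiff x hx).hasDerivWithinAt
    rwa [← iteratedDerivWithin_succ] at this
  have hcont : ContinuousOn (F (m+1)) s :=
    hf.continuousOn_iteratedDerivWithin le_rfl hud
  have h0 : ∀ x ∈ s, |F 0 x| ≤ σ := by
    intro x hx; simpa [hF] using hfσ x hx
  have hkey := key m F x₁ t c₂ σ ht hc₂
    (by rw [hseq]; exact hd) (by rw [hseq]; exact hcont)
    (by rw [hseq]; exact h0) (by rw [hseq]; exact hfk)
  -- hkey : c₂ * t ^ (m+1) ≤ 2 ^ (m+1) * σ
  have hk0 : ((m+1 : ℕ) : ℝ) ≠ 0 := by positivity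
  have ht1 : t ^ (m+1) ≤ 2 ^ (m+1) * (σ / c₂) := by
    rw [mul_div_assoc'] at *
    rw [le_div_iff₀ hc₂]
    nlinarith [hkey]
  have ht2 : t ≤ 2 * (σ / c₂) ^ (1 / ((m+1 : ℕ) : ℝ)) := by
    have e1 : t = ((t ^ (m+1) : ℝ)) ^ (1 / ((m+1 : ℕ) : ℝ)) := by
      rw [← Real.rpow_natCast t (m+1), ← Real.rpow_mul ht.le]
      rw [mul_one_div, div_self hk0, Real.rpow_one]
    have e2 : ((t ^ (m+1) : ℝ)) ^ (1 / ((m+1 : ℕ) : ℝ)) ≤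
        ((2 ^ (m+1) * (σ / c₂) : ℝ)) ^ (1 / ((m+1 : ℕ) : ℝ)) :=
      Real.rpow_le_rpow (by positivity) ht1 (by positivity)
    have e3 : ((2 ^ (m+1) * (σ / c₂) : ℝ)) ^ (1 / ((m+1 : ℕ) : ℝ)) =
        2 * (σ / c₂) ^ (1 / ((m+1 : ℕ) : ℝ)) := by
      rw [Real.mul_rpow (by positivity) (by positivity)]
      congr 1
      rw [← Real.rpow_natCast 2 (m+1), ← Real.rpow_mul (by norm_num)]
      rw [mul_one_div, div_self hk0, Real.rpow_one]
    rw [e1]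
    calc ((t ^ (m+1) : ℝ)) ^ (1 / ((m+1 : ℕ) : ℝ)) ≤ _ := e2
      _ = _ := e3
  calc h = ((m:ℝ) + 1) * t := hht.symm
    _ ≤ ((m:ℝ) + 1) * (2 * (σ / c₂) ^ (1 / ((m+1 : ℕ) : ℝ))) := by
        apply mul_le_mul_of_nonneg_left ht2 (by positivity)
    _ = 2 * ((m + 1 : ℕ) : ℝ) * (σ / c₂) ^ (1 / ((m+1 : ℕ) : ℝ)) := by push_cast; ring
end
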